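/- Let (Ω,F,P) be a complete probability space, and let G : L0+ → (−∞,∞] be bounded from below such that: (1) for every λ ∈ ℝ the lower-contour set L_G(λ) = {f ∈ L0+ : G(f) ≤ λ} is convex and closed in probability, and (2) there exists λ₀ such that L_G(λ₀) is nonempty and bounded in probability. Then G attains its infimum on L0+. -/

import Mathlib

open MeasureTheory Filter
open Real

section AuxAttains

variable {Ω : Type*} [MeasurableSpace Ω] (μ : Measure Ω) [IsProbabilityMeasure μ]

private lemma int_u_aux {h : Ω → ℝ} (hm : Measurable h) (hp : ∀ᵐ ω ∂μ, 0 ≤ h ω) :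
    Integrable (fun ω => 1 - exp (-h ω)) μ := by
  refine (integrable_const (1:ℝ)).mono' ?_ ?_
  · exact (measurable_const.sub (hm.neg.exp)).aestronglyMeasurable
  · filter_upwards [hp] with ω hω
    have h1 : exp (-h ω) ≤ 1 := exp_le_one_iff.2 (by linarith)
    have h2 : 0 < exp (-h ω) := exp_pos _
    rw [Real.norm_eq_abs, abs_of_nonneg (by linarith)]; linarith

private lemma int_u_nonneg_aux {h : Ω → ℝ} (hp : ∀ᵐ ω ∂μ, 0 ≤ h ω) :
    0 ≤ ∫ ω, (1 - exp (-h ω)) ∂μ := by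
  refine integral_nonneg_of_ae ?_
  filter_upwards [hp] with ω hω
  have h1 : exp (-h ω) ≤ 1 := exp_le_one_iff.2 (by linarith)
  show (0:ℝ) ≤ 1 - exp (-h ω)
  linarith

private lemma int_u_le_one_aux {h : Ω → ℝ} (hm : Measurable h) (hp : ∀ᵐ ω ∂μ, 0 ≤ h ω) :
    ∫ ω, (1 - exp (-h ω)) ∂μ ≤ 1 := by
  calc ∫ ω, (1 - exp (-h ω)) ∂μ ≤ ∫ _, (1:ℝ) ∂μ := by
        refine integral_mono_ae (int_u_aux μ hm hp) (integrable_const 1) ?_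
        filter_upwards with ω
        have h2 : 0 < exp (-h ω) := exp_pos _
        linarith
    _ = 1 := by simp

private lemma u_mid_eq_aux (x y : ℝ) :
    ((1 - exp (-x)) + (1 - exp (-y))) / 2 + (exp (-x/2) - exp (-y/2))^2 / 2
      = 1 - exp (-((x + y)/2)) := by
  have hx : exp (-x) = exp (-x/2) * exp (-x/2) := by rw [← Real.exp_add]; ring_nf
  have hy : exp (-y) = exp (-y/2) * exp (-y/2) := by rw [← Real.exp_add]; ring_nf
  have hxy : exp (-((x+y)/2)) = exp (-x/2) * exp (-y/2) := by rw [← Real.exp_add]; ring_nf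
  rw [hx, hy, hxy]; ring

private lemma gap_lb_aux {x y M ε : ℝ} (hx0 : 0 ≤ x) (hxM : x ≤ M) (hy0 : 0 ≤ y) (hyM : y ≤ M)
    (hd : ε ≤ |x - y|) (hε : 0 < ε) :
    exp (-M) * (1 - exp (-ε/2))^2 ≤ (exp (-x/2) - exp (-y/2))^2 := by
  wlog hxy : x ≤ y generalizing x y
  · rw [abs_sub_comm] at hd
    have := this hy0 hyM hx0 hxM hd (le_of_not_ge hxy)
    nlinarith [this]
  have hd' : ε ≤ y - x := by rw [abs_of_nonpos (by linarith)] at hd; linarith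
  have h1 : exp (-M/2) ≤ exp (-x/2) := exp_le_exp.2 (by linarith)
  have h2 : exp (-(y)/2) ≤ exp (-x/2) * exp (-ε/2) := by
    rw [← Real.exp_add]
    exact exp_le_exp.2 (by linarith)
  have h3 : 0 < exp (-x/2) := exp_pos _
  have h4 : exp (-x/2) - exp (-y/2) ≥ exp (-x/2) * (1 - exp (-ε/2)) := by nlinarith
  have h5 : 0 ≤ 1 - exp (-ε/2) := by
    have : exp (-ε/2) ≤ 1 := exp_le_one_iff.2 (by linarith)
    linarith
  have h6 : exp (-M) = exp (-M/2) * exp (-M/2) := by rw [← Real.exp_add]; ring_nf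
  have h7 : exp (-M/2) * (1 - exp (-ε/2)) ≤ exp (-x/2) * (1 - exp (-ε/2)) :=
    mul_le_mul_of_nonneg_right h1 h5
  have h8 : 0 ≤ exp (-M/2) * (1 - exp (-ε/2)) := mul_nonneg (exp_pos _).le h5
  calc exp (-M) * (1 - exp (-ε/2))^2 = (exp (-M/2) * (1 - exp (-ε/2)))^2 := by rw [h6]; ring
    _ ≤ (exp (-x/2) * (1 - exp (-ε/2)))^2 := by nlinarith
    _ ≤ (exp (-x/2) - exp (-y/2))^2 := by nlinarith

private lemma integral_gap_aux {h₁ h₂ : Ω → ℝ} (m₁ : Measurable h₁) (m₂ : Measurable h₂)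
    (p₁ : ∀ᵐ ω ∂μ, 0 ≤ h₁ ω) (p₂ : ∀ᵐ ω ∂μ, 0 ≤ h₂ ω) {M ε : ℝ} (hε : 0 < ε) :
    (∫ ω, (1 - exp (-h₁ ω)) ∂μ + ∫ ω, (1 - exp (-h₂ ω)) ∂μ)/2
      + (exp (-M) * (1 - exp (-ε/2))^2 / 2)
        * (μ {ω | ε ≤ |h₁ ω - h₂ ω| ∧ h₁ ω ≤ M ∧ h₂ ω ≤ M}).toReal
    ≤ ∫ ω, (1 - exp (-((h₁ ω + h₂ ω)/2))) ∂μ := by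
  set δ : ℝ := exp (-M) * (1 - exp (-ε/2))^2 / 2 with hδdef
  set A : Set Ω := {ω | ε ≤ |h₁ ω - h₂ ω| ∧ h₁ ω ≤ M ∧ h₂ ω ≤ M} with hAdef
  have hA : MeasurableSet A := by
    have : A = {ω | ε ≤ |h₁ ω - h₂ ω|} ∩ ({ω | h₁ ω ≤ M} ∩ {ω | h₂ ω ≤ M}) := by
      ext ω; simp [hAdef, Set.mem_setOf_eq, and_assoc]
    rw [this]
    exact (measurableSet_le measurable_const (m₁.sub m₂).abs).inter
      ((measurableSet_le m₁ measurable_const).inter (measurableSet_le m₂ measurable_const))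
  have hmid : Measurable fun ω => (h₁ ω + h₂ ω)/2 := (m₁.add m₂).div_const 2
  have hmidp : ∀ᵐ ω ∂μ, 0 ≤ (h₁ ω + h₂ ω)/2 := by
    filter_upwards [p₁, p₂] with ω a b; linarith
  have i₁ := int_u_aux μ m₁ p₁
  have i₂ := int_u_aux μ m₂ p₂
  have imid := int_u_aux μ hmid hmidp
  have iind : Integrable (A.indicator fun _ => δ) μ :=
    (integrable_const δ).indicator hA
  have key : ∫ ω, ((1 - exp (-h₁ ω)) + (1 - exp (-h₂ ω)))/2 + A.indicator (fun _ => δ) ω ∂μ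
      ≤ ∫ ω, (1 - exp (-((h₁ ω + h₂ ω)/2))) ∂μ := by
    refine integral_mono_ae (((i₁.add i₂).div_const 2).add iind) imid ?_
    filter_upwards [p₁, p₂] with ω a b
    have hmid_eq := u_mid_eq_aux (h₁ ω) (h₂ ω)
    have hind : A.indicator (fun _ => δ) ω ≤ (exp (-h₁ ω/2) - exp (-h₂ ω/2))^2 / 2 := by
      by_cases hω : ω ∈ A
      · rw [Set.indicator_of_mem hω]
        obtain ⟨c1, c2, c3⟩ := hω
        have := gap_lb_aux a c2 b c3 c1 hε
        rw [hδdef]; linarith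
      · rw [Set.indicator_of_notMem hω]
        positivity
    calc ((1 - exp (-h₁ ω)) + (1 - exp (-h₂ ω)))/2 + A.indicator (fun _ => δ) ω
        ≤ ((1 - exp (-h₁ ω)) + (1 - exp (-h₂ ω)))/2
            + (exp (-h₁ ω/2) - exp (-h₂ ω/2))^2 / 2 := by linarith
      _ = 1 - exp (-((h₁ ω + h₂ ω)/2)) := hmid_eq
  have iL : Integrable (fun ω => ((1 - exp (-h₁ ω)) + (1 - exp (-h₂ ω)))/2) μ :=
    (i₁.add i₂).div_const 2
  have e1 : ∫ ω, (((1 - exp (-h₁ ω)) + (1 - exp (-h₂ ω)))/2 + A.indicator (fun _ => δ) ω) ∂μ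
      = ∫ ω, ((1 - exp (-h₁ ω)) + (1 - exp (-h₂ ω)))/2 ∂μ + ∫ ω, A.indicator (fun _ => δ) ω ∂μ :=
    integral_add iL iind
  have e2 : ∫ ω, ((1 - exp (-h₁ ω)) + (1 - exp (-h₂ ω)))/2 ∂μ
      = (∫ ω, ((1 - exp (-h₁ ω)) + (1 - exp (-h₂ ω))) ∂μ)/2 := integral_div 2 _
  have e3 : ∫ ω, ((1 - exp (-h₁ ω)) + (1 - exp (-h₂ ω))) ∂μ
      = ∫ ω, (1 - exp (-h₁ ω)) ∂μ + ∫ ω, (1 - exp (-h₂ ω)) ∂μ := integral_add i₁ i₂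
  have e4 : ∫ ω, A.indicator (fun _ => δ) ω ∂μ = (μ A).toReal • δ := integral_indicator_const δ hA
  have := key
  rw [e1, e2, e3, e4] at this
  rw [smul_eq_mul] at this
  linarith

end AuxAttains

/-- The set `L0+`: (versions of) nonnegative real-valued random variables. -/
def L0plus {Ω : Type*} [MeasurableSpace Ω] (μ : Measure Ω) : Set (Ω → ℝ) :=
  {f | Measurable f ∧ ∀ᵐ ω ∂μ, 0 ≤ f ω}

/-- A set of random variables is *bounded in probability* if
`sup_{f ∈ C} P[|f| ≥ M] → 0` as `M → ∞`. -/
def BoundedInProbability {Ω : Type*} [MeasurableSpace Ω] (μ : Measure Ω)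
    (C : Set (Ω → ℝ)) : Prop :=
  Tendsto (fun M : ℝ => ⨆ f ∈ C, μ {ω | M ≤ |f ω|}) atTop (nhds 0)

/-- A set of random variables is *closed in probability* (closed for the metrizable
topology of convergence in measure) if it contains every limit in measure of a
sequence of its elements. -/
def ClosedInMeasure {Ω : Type*} [MeasurableSpace Ω] (μ : Measure Ω)
    (C : Set (Ω → ℝ)) : Prop :=
  ∀ (f : ℕ → Ω → ℝ) (g : Ω → ℝ), (∀ n, f n ∈ C) →
    TendstoInMeasure μ f atTop g → g ∈ C

/-- A convex set `C` of random variables is *convexly compact* (for the topology of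
convergence in probability) if every family of closed (in probability) and convex
subsets of `C`, indexed by a nonempty set, with the finite-intersection property has
nonempty total intersection. -/
def ConvexlyCompactInMeasure {Ω : Type*} [MeasurableSpace Ω] (μ : Measure Ω)
    (C : Set (Ω → ℝ)) : Prop :=
  Convex ℝ C ∧
    ∀ (A : Type) (_ : Nonempty A) (F : A → Set (Ω → ℝ)),
      (∀ α, ClosedInMeasure μ (F α)) → (∀ α, Convex ℝ (F α)) → (∀ α, F α ⊆ C) →
      (∀ D : Finset A, D.Nonempty → (⋂ α ∈ D, F α).Nonempty) →
      (⋂ α, F α).Nonempty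

/-- Let `G : L0+ → (-∞,∞]` be bounded from below, with all real
lower-contour sets convex and closed in probability, and with some nonempty
lower-contour set that is bounded in probability. Then `G` attains its infimum
on `L0+`. -/
theorem attains_inf_on_L0plus
    {Ω : Type*} [MeasurableSpace Ω] (μ : Measure Ω) [IsProbabilityMeasure μ]
    [μ.IsComplete]
    (G : (Ω → ℝ) → EReal)
    (hbdd : ∃ c : ℝ, ∀ f ∈ L0plus μ, (c : EReal) ≤ G f)
    (hconv : ∀ l : ℝ, Convex ℝ {f ∈ L0plus μ | G f ≤ (l : EReal)})
    (hcl : ∀ l : ℝ, ClosedInMeasure μ {f ∈ L0plus μ | G f ≤ (l : EReal)})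
    (hcoer : ∃ l₀ : ℝ, {f ∈ L0plus μ | G f ≤ (l₀ : EReal)}.Nonempty ∧
      BoundedInProbability μ {f ∈ L0plus μ | G f ≤ (l₀ : EReal)}) :
    ∃ f₀ ∈ L0plus μ, ∀ f ∈ L0plus μ, G f₀ ≤ G f := by
  obtain ⟨c, hc⟩ := hbdd
  obtain ⟨l₀, hne, hbp⟩ := hcoer
  obtain ⟨fstar, hfstar⟩ := hne
  set m : EReal := sInf (G '' L0plus μ) with hmdef
  have hml : m ≤ (l₀ : EReal) := le_trans (sInf_le ⟨fstar, hfstar.1, rfl⟩) hfstar.2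
  have hcm : (c : EReal) ≤ m := le_sInf (by rintro x ⟨f, hf, rfl⟩; exact hc f hf)
  have hmbot : m ≠ ⊥ := ((EReal.bot_lt_coe c).trans_le hcm).ne'
  have hmtop : m ≠ ⊤ := (lt_of_le_of_lt hml (EReal.coe_lt_top _)).ne
  set m' := m.toReal with hm'def
  have hm : (m' : EReal) = m := EReal.coe_toReal hmtop hmbot
  have hm'l₀ : m' ≤ l₀ := EReal.coe_le_coe_iff.1 (hm ▸ hml)
  set lam : ℕ → ℝ := fun n => min l₀ (m' + 1/(n+1)) with hlamdef
  have lam_anti : Antitone lam := by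
    intro n k hnk
    refine min_le_min le_rfl (add_le_add_right ?_ m')
    have h1 : (0:ℝ) < (n:ℝ) + 1 := by positivity
    have h2 : ((n:ℝ)+1) ≤ ((k:ℝ)+1) := by
      have : (n:ℝ) ≤ (k:ℝ) := Nat.cast_le.2 hnk
      linarith
    exact one_div_le_one_div_of_le h1 h2
  set A : ℕ → Set (Ω → ℝ) := fun n => {f ∈ L0plus μ | G f ≤ ((lam n : ℝ) : EReal)} with hAdef
  have hA_anti : ∀ n k, n ≤ k → A k ⊆ A n := fun n k h f hf =>
    ⟨hf.1, hf.2.trans (EReal.coe_le_coe_iff.2 (lam_anti h))⟩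
  have hA_subL : ∀ n, A n ⊆ {f ∈ L0plus μ | G f ≤ (l₀ : EReal)} := fun n f hf =>
    ⟨hf.1, hf.2.trans (EReal.coe_le_coe_iff.2 (min_le_left _ _))⟩
  -- nonemptiness of each level set
  have hA_ne : ∀ n : ℕ, (A n).Nonempty := by
    intro n
    by_cases hcase : (l₀ : ℝ) ≤ m' + 1/(n+1)
    · exact ⟨fstar, hfstar.1, le_trans hfstar.2 (EReal.coe_le_coe_iff.2 (le_min le_rfl hcase))⟩
    · push_neg at hcase
      have hpos : (0:ℝ) < 1/(n+1) := by positivity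
      have h1 : m < ((m' + 1/(n+1) : ℝ) : EReal) := by
        rw [← hm]; exact EReal.coe_lt_coe_iff.2 (by linarith)
      obtain ⟨x, ⟨f, hf, rfl⟩, hx⟩ := sInf_lt_iff.1 h1
      refine ⟨f, hf, ?_⟩
      have heq : lam n = m' + 1/(n+1) := min_eq_right hcase.le
      rw [heq]; exact hx.le
  choose F hF using hA_ne
  set K : ℕ → Set (Ω → ℝ) := fun n => convexHull ℝ (F '' Set.Ici n) with hKdef
  have hK_sub : ∀ n, K n ⊆ A n := by
    intro n
    refine convexHull_min ?_ (hconv (lam n))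
    rintro _ ⟨k, hk, rfl⟩
    exact hA_anti n k hk (hF k)
  have hK_anti : ∀ n k, n ≤ k → K k ⊆ K n := fun n k h =>
    convexHull_mono (Set.image_mono (Set.Ici_subset_Ici.2 h))
  have hK_ne : ∀ n, (K n).Nonempty := fun n =>
    ⟨F n, subset_convexHull ℝ _ ⟨n, Set.self_mem_Ici, rfl⟩⟩
  have hK_meas : ∀ n, ∀ h ∈ K n, Measurable h := fun n h hh => (hK_sub n hh).1.1
  have hK_pos : ∀ n, ∀ h ∈ K n, ∀ᵐ ω ∂μ, 0 ≤ h ω := fun n h hh => (hK_sub n hh).1.2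
  set I : (Ω → ℝ) → ℝ := fun h => ∫ ω, (1 - exp (-h ω)) ∂μ with hIdef
  set s : ℕ → ℝ := fun n => sSup (I '' K n) with hsdef
  have hs_bdd : ∀ n, BddAbove (I '' K n) := by
    intro n
    refine ⟨1, ?_⟩
    rintro _ ⟨h, hh, rfl⟩
    exact int_u_le_one_aux μ (hK_meas n h hh) (hK_pos n h hh)
  have hI_le_s : ∀ n, ∀ h ∈ K n, I h ≤ s n := fun n h hh => le_csSup (hs_bdd n) ⟨h, hh, rfl⟩
  have hs_nonneg : ∀ n, 0 ≤ s n := by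
    intro n
    obtain ⟨h, hh⟩ := hK_ne n
    exact le_trans (int_u_nonneg_aux μ (hK_pos n h hh)) (hI_le_s n h hh)
  have hs_anti : Antitone s := by
    intro n k hnk
    exact csSup_le_csSup (hs_bdd n) ((hK_ne k).image I) (Set.image_mono (hK_anti n k hnk))
  set sI : ℝ := ⨅ n, s n with hsIdef
  have hsbddbelow : BddBelow (Set.range s) := ⟨0, by rintro _ ⟨n, rfl⟩; exact hs_nonneg n⟩
  have hs_tendsto : Tendsto s atTop (nhds sI) := tendsto_atTop_ciInf hs_anti hsbddbelow
  have hsI_le : ∀ n, sI ≤ s n := fun n => ciInf_le hsbddbelow n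
  -- near-optimal elements
  have hgex : ∀ n : ℕ, ∃ h ∈ K n, s n - 1/(n+1) < I h := by
    intro n
    have hlt : s n - 1/(n+1) < s n := by
      have : (0:ℝ) < 1/(n+1) := by positivity
      linarith
    obtain ⟨x, ⟨h, hh, rfl⟩, hx⟩ := exists_lt_of_lt_csSup ((hK_ne n).image I) hlt
    exact ⟨h, hh, hx⟩
  choose g hgK hgI using hgex
  have hgmeas : ∀ n, Measurable (g n) := fun n => hK_meas n (g n) (hgK n)
  have hgpos : ∀ n, ∀ᵐ ω ∂μ, 0 ≤ g n ω := fun n => hK_pos n (g n) (hgK n)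
  have hgB : ∀ n, g n ∈ {f ∈ L0plus μ | G f ≤ (l₀ : EReal)} := fun n =>
    hA_subL n (hK_sub n (hgK n))
  -- tail bound from bounded in probability
  have htail : ∀ θ : ENNReal, 0 < θ → ∃ M : ℝ, ∀ n, μ {ω | M ≤ |g n ω|} ≤ θ := by
    intro θ hθ
    obtain ⟨M, hM⟩ := (hbp.eventually_lt_const hθ).exists
    refine ⟨M, fun n => ?_⟩
    exact le_trans (le_iSup₂ (f := fun (f : Ω → ℝ) (_ : f ∈ {f ∈ L0plus μ | G f ≤ (l₀ : EReal)}) => μ {ω | M ≤ |f ω|}) (g n) (hgB n)) hM.le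
  -- Cauchy-in-measure estimate for the sequence g
  have hcauchy : ∀ ε : ℝ, 0 < ε → ∀ θ : ENNReal, 0 < θ → ∃ N : ℕ, ∀ n k, N ≤ n → N ≤ k →
      μ {ω | ε ≤ |g n ω - g k ω|} ≤ θ := by
    intro ε hε θ hθ
    set θ' := min θ 1 with hθ'def
    have hθ'pos : 0 < θ' := lt_min hθ zero_lt_one
    have hθ'top : θ' ≠ ⊤ := ((min_le_right θ 1).trans_lt ENNReal.one_lt_top).ne
    have hq_pos : 0 < θ'/4 := ENNReal.div_pos_iff.2 ⟨hθ'pos.ne', by norm_num⟩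
    have hq_top : θ'/4 ≠ ⊤ := (ENNReal.div_lt_top hθ'top (by norm_num)).ne
    obtain ⟨M, hM⟩ := htail (θ'/4) hq_pos
    set δ : ℝ := exp (-M) * (1 - exp (-ε/2))^2 / 2 with hδdef
    have hδpos : 0 < δ := by
      have h1 : exp (-ε/2) < 1 := exp_lt_one_iff.2 (by linarith)
      have h2 : 0 < 1 - exp (-ε/2) := by linarith
      have h3 : 0 < exp (-M) := exp_pos _
      positivity
    set η : ℝ := (θ'/4).toReal with hηdef
    have hηpos : 0 < η := ENNReal.toReal_pos hq_pos.ne' hq_top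
    have h2t : Tendsto (fun N : ℕ => (s N - sI) + 1/(N+1)) atTop (nhds 0) := by
      have t1 : Tendsto (fun N : ℕ => s N - sI) atTop (nhds (sI - sI)) := hs_tendsto.sub_const sI
      rw [sub_self] at t1
      have t2 : Tendsto (fun N : ℕ => 1/((N:ℝ)+1)) atTop (nhds 0) :=
        tendsto_one_div_add_atTop_nhds_zero_nat
      simpa using t1.add t2
    obtain ⟨N, hN⟩ := (h2t.eventually_lt_const (by positivity : (0:ℝ) < δ*η)).exists
    have hsum4 : θ'/4 + (θ'/4 + (θ'/4 + θ'/4)) = θ' := by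
      have h44 : (4:ENNReal) * (θ'/4) = θ' := ENNReal.mul_div_cancel' (by norm_num) (by norm_num)
      calc θ'/4 + (θ'/4 + (θ'/4 + θ'/4)) = 4*(θ'/4) := by ring
        _ = θ' := h44
    have hmain : ∀ n k, N ≤ n → n ≤ k → μ {ω | ε ≤ |g n ω - g k ω|} ≤ θ := by
      intro n k hn hnk
      have hkN : N ≤ k := le_trans hn hnk
      set B : Set Ω := {ω | ε ≤ |g n ω - g k ω| ∧ g n ω ≤ M ∧ g k ω ≤ M} with hBdef
      have h1 : g n ∈ K n := hgK n
      have h2' : g k ∈ K n := hK_anti n k hnk (hgK k)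
      have hconvK : Convex ℝ (K n) := convex_convexHull ℝ _
      have hmidmem : (fun ω => (g n ω + g k ω)/2) ∈ K n := by
        have hmem := hconvK h1 h2' (by norm_num : (0:ℝ) ≤ 1/2) (by norm_num : (0:ℝ) ≤ 1/2)
          (by norm_num)
        convert hmem using 1
        funext ω
        simp only [Pi.add_apply, Pi.smul_apply, smul_eq_mul]
        ring
      have hIneq := integral_gap_aux μ (hgmeas n) (hgmeas k) (hgpos n) (hgpos k) (M := M) hε
      have hImid : I (fun ω => (g n ω + g k ω)/2) ≤ s n := hI_le_s n _ hmidmem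
      have hIn := hgI n
      have hIk := hgI k
      have hsn : s n ≤ s N := hs_anti hn
      have hsk : sI ≤ s k := hsI_le k
      have h1n : 1/((n:ℝ)+1) ≤ 1/((N:ℝ)+1) := by
        refine one_div_le_one_div_of_le (by positivity) ?_
        have : (N:ℝ) ≤ n := Nat.cast_le.2 hn
        linarith
      have h1k : 1/((k:ℝ)+1) ≤ 1/((N:ℝ)+1) := by
        refine one_div_le_one_div_of_le (by positivity) ?_
        have : (N:ℝ) ≤ k := Nat.cast_le.2 hkN
        linarith
      have hsNI : sI ≤ s N := hsI_le N
      have hchain : (I (g n) + I (g k))/2 + δ * (μ B).toReal ≤ s n := le_trans hIneq hImid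
      have hbound : δ * (μ B).toReal < δ * η := by
        calc δ * (μ B).toReal ≤ s n - (I (g n) + I (g k))/2 := by linarith
          _ < s N - sI + 1/(N+1) := by linarith
          _ < δ * η := hN
      have hμB : (μ B).toReal < η := (mul_lt_mul_iff_right₀ hδpos).1 hbound
      have hμB' : μ B ≤ θ'/4 := by
        have hfin : μ B ≠ ⊤ := measure_ne_top μ _
        have hle : μ B ≤ ENNReal.ofReal η := (ENNReal.le_ofReal_iff_toReal_le hfin hηpos.le).2 hμB.le
        rwa [hηdef, ENNReal.ofReal_toReal hq_top] at hle
      have hincl : {ω | ε ≤ |g n ω - g k ω|} ⊆ B ∪ ({ω | M ≤ |g n ω|} ∪ {ω | M ≤ |g k ω|}) := by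
        intro ω hω
        by_cases hb1 : g n ω ≤ M
        · by_cases hb2 : g k ω ≤ M
          · exact Or.inl ⟨hω, hb1, hb2⟩
          · exact Or.inr (Or.inr (le_trans (not_le.1 hb2).le (le_abs_self _)))
        · exact Or.inr (Or.inl (le_trans (not_le.1 hb1).le (le_abs_self _)))
      calc μ {ω | ε ≤ |g n ω - g k ω|}
          ≤ μ (B ∪ ({ω | M ≤ |g n ω|} ∪ {ω | M ≤ |g k ω|})) := measure_mono hincl
        _ ≤ μ B + μ ({ω | M ≤ |g n ω|} ∪ {ω | M ≤ |g k ω|}) := measure_union_le _ _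
        _ ≤ μ B + (μ {ω | M ≤ |g n ω|} + μ {ω | M ≤ |g k ω|}) :=
            add_le_add_right (measure_union_le _ _) _
        _ ≤ θ'/4 + (θ'/4 + θ'/4) := add_le_add hμB' (add_le_add (hM n) (hM k))
        _ ≤ θ'/4 + (θ'/4 + (θ'/4 + θ'/4)) := by
            refine add_le_add_right (add_le_add_right le_self_add _) _
        _ = θ' := hsum4
        _ ≤ θ := min_le_left _ _
    refine ⟨N, fun n k hn hk => ?_⟩
    rcases le_total n k with h | h
    · exact hmain n k hn h
    · have hres := hmain k n hk h
      have heq : {ω | ε ≤ |g n ω - g k ω|} = {ω | ε ≤ |g k ω - g n ω|} := by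
        ext ω; simp only [Set.mem_setOf_eq, abs_sub_comm]
      rw [heq]; exact hres
  -- rapidly Cauchy subsequence
  have hNs : ∀ j : ℕ, ∃ N : ℕ, ∀ n k, N ≤ n → N ≤ k →
      μ {ω | (1/2:ℝ)^j ≤ |g n ω - g k ω|} ≤ (1/2:ENNReal)^j := by
    intro j
    exact hcauchy ((1/2)^j) (by positivity) ((1/2)^j)
      (ENNReal.pow_pos (by norm_num) j)
  choose Ns hNs' using hNs
  set φ : ℕ → ℕ := fun j => Nat.rec (Ns 0) (fun j ih => max (ih + 1) (Ns (j+1))) j with hφdef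
  have hφsucc : ∀ j, φ (j+1) = max (φ j + 1) (Ns (j+1)) := fun j => rfl
  have hφmono : StrictMono φ := strictMono_nat_of_lt_succ (fun j => by
    rw [hφsucc]
    exact lt_of_lt_of_le (Nat.lt_succ_self _) (le_max_left _ _))
  have hφNs : ∀ j, Ns j ≤ φ j := by
    intro j
    cases j with
    | zero => exact le_rfl
    | succ j => rw [hφsucc]; exact le_max_right _ _
  set E : ℕ → Set Ω := fun j => {ω | (1/2:ℝ)^j ≤ |g (φ j) ω - g (φ (j+1)) ω|} with hEdef
  have hE : ∀ j, μ (E j) ≤ (1/2:ENNReal)^j := by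
    intro j
    exact hNs' j (φ j) (φ (j+1)) (hφNs j) (le_trans (hφNs j) (hφmono.monotone (Nat.le_succ j)))
  have hgeo : ∑' j : ℕ, (1/2:ENNReal)^j ≠ ⊤ := by
    rw [one_div, ENNReal.tsum_geometric]
    simp [ENNReal.one_sub_inv_two]
  have hEsum : ∑' j, μ (E j) ≠ ⊤ := ne_top_of_le_ne_top hgeo (ENNReal.tsum_le_tsum hE)
  have hBC : ∀ᵐ ω ∂μ, ∀ᶠ j in atTop, ω ∉ E j := MeasureTheory.ae_eventually_notMem hEsum
  have hallpos : ∀ᵐ ω ∂μ, ∀ n, 0 ≤ g n ω := ae_all_iff.2 hgpos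
  have hconv_ae : ∀ᵐ ω ∂μ,
      (∃ L : ℝ, Tendsto (fun j => g (φ j) ω) atTop (nhds L)) ∧ ∀ n, 0 ≤ g n ω := by
    filter_upwards [hBC, hallpos] with ω hω hpos
    refine ⟨?_, hpos⟩
    obtain ⟨J, hJ⟩ := eventually_atTop.1 hω
    have hdist : ∀ j : ℕ, dist (g (φ (j+J)) ω) (g (φ (j+1+J)) ω) ≤ (1/2:ℝ)^(j+J) := by
      intro j
      have hnot := hJ (j+J) (Nat.le_add_left J j)
      have heq : j+1+J = (j+J)+1 := by omega
      rw [Real.dist_eq, heq]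
      exact (not_le.1 hnot).le
    have hsummable : Summable (fun j : ℕ => (1/2:ℝ)^(j+J)) := by
      have heq : (fun j : ℕ => (1/2:ℝ)^(j+J)) = fun j : ℕ => (1/2:ℝ)^j * (1/2:ℝ)^J := by
        funext j; rw [pow_add]
      rw [heq]
      exact summable_geometric_two.mul_right _
    have hcs : CauchySeq (fun j => g (φ (j+J)) ω) :=
      cauchySeq_of_dist_le_of_summable _ hdist hsummable
    obtain ⟨L, hL⟩ := cauchySeq_tendsto_of_complete hcs
    exact ⟨L, (tendsto_add_atTop_iff_nat J).1 hL⟩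
  set glim : Ω → ℝ :=
    fun ω => (Filter.liminf (fun j => ENNReal.ofReal (g (φ j) ω)) atTop).toReal with hglimdef
  have hglim_meas : Measurable glim := by
    apply Measurable.ennreal_toReal
    exact Measurable.liminf (fun j => ENNReal.measurable_ofReal.comp (hgmeas (φ j)))
  have hglim_tend : ∀ᵐ ω ∂μ, Tendsto (fun j => g (φ j) ω) atTop (nhds (glim ω)) := by
    filter_upwards [hconv_ae] with ω h
    obtain ⟨⟨L, hL⟩, hpos⟩ := h
    have hL0 : 0 ≤ L := ge_of_tendsto' hL (fun j => hpos (φ j))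
    have hofReal : Tendsto (fun j => ENNReal.ofReal (g (φ j) ω)) atTop
        (nhds (ENNReal.ofReal L)) := (ENNReal.continuous_ofReal.tendsto L).comp hL
    have hliminf : Filter.liminf (fun j => ENNReal.ofReal (g (φ j) ω)) atTop
        = ENNReal.ofReal L := hofReal.liminf_eq
    have hgl : glim ω = L := by
      rw [hglimdef]
      simp only
      rw [hliminf, ENNReal.toReal_ofReal hL0]
    rw [hgl]
    exact hL
  have hglim_L0 : glim ∈ L0plus μ :=
    ⟨hglim_meas, Filter.Eventually.of_forall (fun ω => ENNReal.toReal_nonneg)⟩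
  have hginA : ∀ n, glim ∈ A n := by
    intro n
    refine hcl (lam n) (fun j => g (φ (j + n))) glim (fun j => ?_) ?_
    · have h1 : n ≤ φ (j+n) := le_trans (Nat.le_add_left n j) hφmono.le_apply
      exact hA_anti n (φ (j+n)) h1 (hK_sub _ (hgK (φ (j+n))))
    · refine tendstoInMeasure_of_tendsto_ae
        (fun j => (hgmeas (φ (j+n))).aestronglyMeasurable) ?_
      filter_upwards [hglim_tend] with ω h
      exact h.comp (tendsto_add_atTop_nat n)
  have hGlam : ∀ n : ℕ, G glim ≤ ((m' + 1/(n+1) : ℝ) : EReal) := fun n =>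
    (hginA n).2.trans (EReal.coe_le_coe_iff.2 (min_le_right _ _))
  have hlimE : Tendsto (fun n : ℕ => ((m' + 1/(n+1) : ℝ) : EReal)) atTop
      (nhds ((m' : ℝ) : EReal)) := by
    have t : Tendsto (fun n : ℕ => m' + 1/((n:ℝ)+1)) atTop (nhds m') := by
      simpa using (tendsto_const_nhds (x := m')).add tendsto_one_div_add_atTop_nhds_zero_nat
    exact (continuous_coe_real_ereal.tendsto m').comp t
  have hGm : G glim ≤ ((m' : ℝ) : EReal) :=
    ge_of_tendsto hlimE (Filter.Eventually.of_forall hGlam)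
  refine ⟨glim, hglim_L0, fun f hf => ?_⟩
  refine hGm.trans ?_
  rw [hm]
  exact sInf_le ⟨f, hf, rfl⟩
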